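/- For every c > 0, I_F := ∫₀^{X−1} ((x − Mc(1+x))/(1+x)²) φ_{cM(1+x), c²D²(1+x)/(u+cv)}(x) dx = −(c²D²/(u+cv))·[Φ(A(x)) + exp(2λ(1−cM))·Φ(B(x))]|₁^X + 2(1−cM)·exp(2λ(1−cM))·[Φ(B(x))]|₁^X − [(2cD/√(2πx(u+cv)))·exp(−(u+cv)(x(1−cM)−1)²/(2x c²D²))]|₁^X, where [g(x)]|₁^X denotes g(X) − g(1). -/

import Mathlib

open MeasureTheory Real

/-- Standard normal cumulative distribution function. -/
noncomputable def stdNormalCDF (x : ℝ) : ℝ :=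
  ∫ t in Set.Iic x, (Real.sqrt (2 * Real.pi))⁻¹ * Real.exp (-t ^ 2 / 2)

/-- P.d.f. of the normal distribution with mean `m` and variance `s2`. -/
noncomputable def normalPdf (m s2 x : ℝ) : ℝ :=
  (Real.sqrt (2 * Real.pi * s2))⁻¹ * Real.exp (-(x - m) ^ 2 / (2 * s2))

/-- `A(x) = (√(u+cv)/(cD√x))·(x(1−cM) − 1)`. -/
noncomputable def Afun (u c v M D x : ℝ) : ℝ :=
  Real.sqrt (u + c * v) / (c * D * Real.sqrt x) * (x * (1 - c * M) - 1)

/-- `B(x) = −(√(u+cv)/(cD√x))·(1 + x(1−cM))`. -/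
noncomputable def Bfun (u c v M D x : ℝ) : ℝ :=
  -(Real.sqrt (u + c * v) / (c * D * Real.sqrt x)) * (1 + x * (1 - c * M))

/-- The boundary term `(2cD/√(2πx(u+cv)))·exp(−(u+cv)(x(1−cM)−1)²/(2x c²D²))`. -/
noncomputable def Gfun (u c v M D x : ℝ) : ℝ :=
  2 * c * D / Real.sqrt (2 * Real.pi * x * (u + c * v)) *
    Real.exp (-((u + c * v) * (x * (1 - c * M) - 1) ^ 2) / (2 * x * (c ^ 2 * D ^ 2)))


noncomputable def Ffun (u c v M D y : ℝ) : ℝ :=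
  -(c ^ 2 * D ^ 2 / (u + c * v)) *
      (stdNormalCDF (Afun u c v M D y)
        + Real.exp (2 * ((u + c * v) / (c ^ 2 * D ^ 2)) * (1 - c * M))
            * stdNormalCDF (Bfun u c v M D y))
    + 2 * (1 - c * M) * Real.exp (2 * ((u + c * v) / (c ^ 2 * D ^ 2)) * (1 - c * M))
        * stdNormalCDF (Bfun u c v M D y)
    - Gfun u c v M D y

lemma stdpdf_integrable :
    Integrable (fun t : ℝ => (Real.sqrt (2 * Real.pi))⁻¹ * Real.exp (-t ^ 2 / 2)) := by
  have h0 : Integrable (fun t : ℝ => Real.exp (-(1/2 : ℝ) * t ^ 2)) :=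
    integrable_exp_neg_mul_sq (by norm_num)
  have h1 := h0.const_mul ((Real.sqrt (2 * Real.pi))⁻¹)
  have : (fun t : ℝ => (Real.sqrt (2 * Real.pi))⁻¹ * Real.exp (-t ^ 2 / 2))
      = fun t : ℝ => (Real.sqrt (2 * Real.pi))⁻¹ * Real.exp (-(1/2 : ℝ) * t ^ 2) := by
    funext t; congr 1; congr 1; ring
  rw [this]; exact h1

lemma stdpdf_continuous :
    Continuous (fun t : ℝ => (Real.sqrt (2 * Real.pi))⁻¹ * Real.exp (-t ^ 2 / 2)) := by
  fun_prop

lemma hasDerivAt_stdNormalCDF (x : ℝ) :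
    HasDerivAt stdNormalCDF ((Real.sqrt (2 * Real.pi))⁻¹ * Real.exp (-x ^ 2 / 2)) x := by
  have heq : stdNormalCDF = fun z =>
      stdNormalCDF 0 + ∫ t in (0:ℝ)..z, (Real.sqrt (2 * Real.pi))⁻¹ * Real.exp (-t ^ 2 / 2) := by
    funext z
    rw [← intervalIntegral.integral_Iic_sub_Iic stdpdf_integrable.integrableOn
      stdpdf_integrable.integrableOn]
    unfold stdNormalCDF; ring
  rw [heq]
  exact (intervalIntegral.integral_hasDerivAt_right stdpdf_integrable.intervalIntegrable
    (stdpdf_continuous.stronglyMeasurableAtFilter _ _)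
    stdpdf_continuous.continuousAt).const_add _

lemma hasDerivAt_Ffun (u c v M D : ℝ) (huv : 0 < u + c * v) (hc : 0 < c) (hD : 0 < D)
    {y : ℝ} (hy : 0 < y) :
    HasDerivAt (Ffun u c v M D)
      ((y - 1 - M * c * y) / y ^ 2 *
        normalPdf (c * M * y) (c ^ 2 * D ^ 2 * y / (u + c * v)) (y - 1)) y := by
  obtain ⟨s, hs, rfl⟩ : ∃ s : ℝ, 0 < s ∧ y = s ^ 2 :=
    ⟨Real.sqrt y, Real.sqrt_pos.2 hy, (Real.sq_sqrt hy.le).symm⟩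
  have hyne : (s ^ 2 : ℝ) ≠ 0 := by positivity
  have hsy : (0:ℝ) < Real.sqrt (s ^ 2) := Real.sqrt_pos.2 hy
  have h1 : HasDerivAt (fun x : ℝ => c * D * Real.sqrt x)
      (c * D * (1 / (2 * Real.sqrt (s ^ 2)))) (s ^ 2) :=
    (Real.hasDerivAt_sqrt hyne).const_mul (c * D)
  have h2 := (hasDerivAt_const (s ^ 2) (Real.sqrt (u + c * v))).div h1 (by positivity)
  have h3 : HasDerivAt (fun x : ℝ => x * (1 - c * M) - 1) (1 * (1 - c * M)) (s ^ 2) :=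
    ((hasDerivAt_id (s ^ 2)).mul_const _).sub_const 1
  have hA := h2.mul h3
  have h4 : HasDerivAt (fun x : ℝ => 1 + x * (1 - c * M)) (1 * (1 - c * M)) (s ^ 2) :=
    ((hasDerivAt_id (s ^ 2)).mul_const _).const_add 1
  have hB := h2.neg.mul h4
  have hin : HasDerivAt (fun x : ℝ => 2 * Real.pi * x * (u + c * v))
      (2 * Real.pi * 1 * (u + c * v)) (s ^ 2) :=
    ((hasDerivAt_id (s ^ 2)).const_mul (2 * Real.pi)).mul_const (u + c * v)
  have hsqrtbig := hin.sqrt (by positivity)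
  have hq1 := (hasDerivAt_const (s ^ 2) (2 * c * D)).div hsqrtbig (by positivity)
  have hnum := ((h3.pow 2).const_mul (u + c * v)).neg
  have hden : HasDerivAt (fun x : ℝ => 2 * x * (c ^ 2 * D ^ 2)) _ (s ^ 2) :=
    ((hasDerivAt_id (s ^ 2)).const_mul 2).mul_const (c ^ 2 * D ^ 2)
  have hn := hnum.div hden (by positivity)
  have hG := hq1.mul hn.exp
  have hΦA := (hasDerivAt_stdNormalCDF _).comp (s ^ 2) hA
  have hΦB := (hasDerivAt_stdNormalCDF _).comp (s ^ 2) hB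
  have hF := (((hΦA.add (hΦB.const_mul
      (Real.exp (2 * ((u + c * v) / (c ^ 2 * D ^ 2)) * (1 - c * M))))).const_mul
        (-(c ^ 2 * D ^ 2 / (u + c * v)))).add (hΦB.const_mul
          (2 * (1 - c * M) * Real.exp (2 * ((u + c * v) / (c ^ 2 * D ^ 2)) * (1 - c * M))))).sub hG
  unfold Ffun Afun Bfun Gfun normalPdf
  refine hF.congr_deriv (Eq.symm ?_)
  simp only [Real.sqrt_sq hs.le, Pi.mul_apply, Pi.div_apply, Pi.neg_apply, Pi.pow_apply]
  set sπ := Real.sqrt (2 * Real.pi) with hsπ_def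
  set su := Real.sqrt (u + c * v) with hsu_def
  have hsu0 : 0 < su := Real.sqrt_pos.2 huv
  have hsπ0 : 0 < sπ := Real.sqrt_pos.2 (by positivity)
  have hsu : su ^ 2 = u + c * v := Real.sq_sqrt huv.le
  have hsπ : sπ ^ 2 = 2 * Real.pi := Real.sq_sqrt (by positivity)
  have hbig : Real.sqrt (2 * Real.pi * s ^ 2 * (u + c * v)) = sπ * s * su := by
    rw [show 2 * Real.pi * s ^ 2 * (u + c * v) = (sπ * s * su) ^ 2 by
      rw [mul_pow, mul_pow, hsπ, hsu]]
    exact Real.sqrt_sq (by positivity)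
  have hbig2 : Real.sqrt (2 * Real.pi * (c ^ 2 * D ^ 2 * s ^ 2 / (u + c * v)))
      = sπ * (c * D * s) / su := by
    rw [show 2 * Real.pi * (c ^ 2 * D ^ 2 * s ^ 2 / (u + c * v)) = (sπ * (c * D * s) / su) ^ 2 by
      rw [div_pow, mul_pow, hsπ, hsu]; try ring]
    exact Real.sqrt_sq (div_nonneg (by positivity) hsu0.le)
  have h4 : -((u + c * v) * (s ^ 2 * (1 - c * M) - 1) ^ 2) / (2 * s ^ 2 * (c ^ 2 * D ^ 2))
      = -(su / (c * D * s) * (s ^ 2 * (1 - c * M) - 1)) ^ 2 / 2 := by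
    rw [← hsu]; field_simp
  have h5 : -(s ^ 2 - 1 - c * M * s ^ 2) ^ 2 / (2 * (c ^ 2 * D ^ 2 * s ^ 2 / (u + c * v)))
      = -(su / (c * D * s) * (s ^ 2 * (1 - c * M) - 1)) ^ 2 / 2 := by
    rw [← hsu]; field_simp; ring
  have hb : -(-(su / (c * D * s)) * (1 + s ^ 2 * (1 - c * M))) ^ 2 / 2
      = -(su / (c * D * s) * (s ^ 2 * (1 - c * M) - 1)) ^ 2 / 2
        - 2 * ((u + c * v) / (c ^ 2 * D ^ 2)) * (1 - c * M) := by
    rw [← hsu]; field_simp; ring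
  rw [hbig, hbig2, h4, h5, hb, Real.exp_sub, ← hsu, ← hsπ]
  set EA := rexp (-(su / (c * D * s) * (s ^ 2 * (1 - c * M) - 1)) ^ 2 / 2) with hEA_def
  set E3 := rexp (2 * (su ^ 2 / (c ^ 2 * D ^ 2)) * (1 - c * M)) with hE3_def
  have hE3 : E3 ≠ 0 := Real.exp_ne_zero _
  field_simp
  ring

/-- Explicit expression for `I_F` for every `c > 0`. -/
theorem IF_eq (u c v t M D : ℝ)
    (hu : 0 < u) (hc : 0 < c) (hv : 0 ≤ v) (ht : v < t) (hM : 0 < M) (hD : 0 < D) :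
    (∫ x in (0:ℝ)..(c * (t - v) / (u + c * v)),
        (x - M * c * (1 + x)) / (1 + x) ^ 2 *
          normalPdf (c * M * (1 + x)) (c ^ 2 * D ^ 2 * (1 + x) / (u + c * v)) x)
      = -(c ^ 2 * D ^ 2 / (u + c * v)) *
          ((stdNormalCDF (Afun u c v M D (c * (t - v) / (u + c * v) + 1))
              + Real.exp (2 * ((u + c * v) / (c ^ 2 * D ^ 2)) * (1 - c * M))
                  * stdNormalCDF (Bfun u c v M D (c * (t - v) / (u + c * v) + 1)))
            - (stdNormalCDF (Afun u c v M D 1)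
              + Real.exp (2 * ((u + c * v) / (c ^ 2 * D ^ 2)) * (1 - c * M))
                  * stdNormalCDF (Bfun u c v M D 1)))
        + 2 * (1 - c * M) * Real.exp (2 * ((u + c * v) / (c ^ 2 * D ^ 2)) * (1 - c * M)) *
            (stdNormalCDF (Bfun u c v M D (c * (t - v) / (u + c * v) + 1))
              - stdNormalCDF (Bfun u c v M D 1))
        - (Gfun u c v M D (c * (t - v) / (u + c * v) + 1) - Gfun u c v M D 1) := by
  have huv : 0 < u + c * v := add_pos_of_pos_of_nonneg hu (mul_nonneg hc.le hv)
  set X := c * (t - v) / (u + c * v) + 1 with hX_def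
  have hb0 : 0 ≤ c * (t - v) / (u + c * v) :=
    div_nonneg (mul_nonneg hc.le (by linarith)) huv.le
  have hX1 : (1:ℝ) ≤ X := by rw [hX_def]; linarith
  have hmem : ∀ y ∈ Set.uIcc (1:ℝ) X, 1 ≤ y := by
    rw [Set.uIcc_of_le hX1]; exact fun y hy => hy.1
  have key : ∀ y ∈ Set.uIcc (1:ℝ) X, HasDerivAt (Ffun u c v M D)
      ((y - 1 - M * c * (1 + (y - 1))) / (1 + (y - 1)) ^ 2 *
        normalPdf (c * M * (1 + (y - 1))) (c ^ 2 * D ^ 2 * (1 + (y - 1)) / (u + c * v)) (y - 1)) y := by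
    intro y hy
    have hy0 : (0:ℝ) < y := lt_of_lt_of_le one_pos (hmem y hy)
    have e : 1 + (y - 1) = y := by ring
    rw [e]
    exact hasDerivAt_Ffun u c v M D huv hc hD hy0
  have hcont : ContinuousOn (fun y : ℝ => (y - 1 - M * c * (1 + (y - 1))) / (1 + (y - 1)) ^ 2 *
        normalPdf (c * M * (1 + (y - 1))) (c ^ 2 * D ^ 2 * (1 + (y - 1)) / (u + c * v)) (y - 1))
      (Set.uIcc (1:ℝ) X) := by
    intro y hy
    have hy0 : (0:ℝ) < 1 + (y - 1) := by have := hmem y hy; linarith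
    apply ContinuousAt.continuousWithinAt
    unfold normalPdf
    have hs2 : 0 < c ^ 2 * D ^ 2 * (1 + (y - 1)) / (u + c * v) :=
      div_pos (mul_pos (by positivity) hy0) huv
    have hden2 : (2 * (c ^ 2 * D ^ 2 * (1 + (y - 1)) / (u + c * v))) ≠ 0 :=
      ne_of_gt (mul_pos two_pos hs2)
    have hsqrt_ne : Real.sqrt (2 * Real.pi * (c ^ 2 * D ^ 2 * (1 + (y - 1)) / (u + c * v))) ≠ 0 :=
      ne_of_gt (Real.sqrt_pos.2 (mul_pos (by positivity) hs2))
    refine ContinuousAt.mul (ContinuousAt.div ?_ ?_ (ne_of_gt (pow_pos hy0 2)))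
      (ContinuousAt.mul (ContinuousAt.inv₀ ?_ hsqrt_ne) ?_)
    · fun_prop
    · fun_prop
    · exact Continuous.continuousAt (by fun_prop)
    · exact Real.continuous_exp.continuousAt.comp
        (ContinuousAt.div (by fun_prop) (by fun_prop) hden2)
  have hint := hcont.intervalIntegrable (μ := volume)
  rw [show (0:ℝ) = 1 - 1 by norm_num,
    show c * (t - v) / (u + c * v) = X - 1 by rw [hX_def]; ring,
    ← intervalIntegral.integral_comp_sub_right _ 1,
    intervalIntegral.integral_eq_sub_of_hasDerivAt key hint]
  simp only [Ffun]
  ring
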